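/- Suppose x_t = ∑_{i=1}^k λ_i v_i where v_1, …, v_k ∈ V, λ_i ≥ 0, ∑λ_i = 1, and let η ∈ [0,1]. Suppose there exists R ≤ 1, a point x* ∈ X*, coefficients Δ*_1, …, Δ*_k with Δ*_i ∈ [0,λ_i] and ∑_{i=1}^k Δ*_i ≤ R, and a point z ∈ F*, such that x* = ∑_{i=1}^k (λ_i − Δ*_i) v_i + (∑_{i=1}^k Δ*_i) z. Let v_{k+1} ∈ argmin_{u∈V} ( uᵀ∇f(x_t) + βηR‖u − x_t‖² ), and let x_{t+1} be either a minimizer of x ↦ xᵀ∇f(x_t) + (β/2)‖x − x_t‖² over conv(v_1,…,v_{k+1}), or a minimizer of f over conv(v_1,…,v_{k+1}). Then f(x_{t+1}) − f* ≤ (1−η)(f(x_t) − f*) + η²β( 2‖x_t − x*‖² + 4R²D_{F*}² ). -/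

import Mathlib

open scoped RealInnerProductSpace BigOperators
open Metric

section helpers

variable {E : Type*} [NormedAddCommGroup E] [InnerProductSpace ℝ E] [CompleteSpace E]

lemma fw_path_deriv (f : E → ℝ) (g : E → E) (hgrad : ∀ x, HasGradientAt f (g x) x)
    (a u : E) (t : ℝ) :
    HasDerivAt (fun s : ℝ => f (a + s • u)) ⟪g (a + t • u), u⟫ t := by
  have h1 : HasDerivAt (fun s : ℝ => a + s • u) u t := by
    simpa using ((hasDerivAt_id t).smul_const u).const_add a
  have h2 := (hgrad (a + t • u)).hasFDerivAt
  simpa [InnerProductSpace.toDual_apply_apply, Function.comp_def] using h2.comp_hasDerivAt t h1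

lemma fw_descent (f : E → ℝ) (g : E → E) (hgrad : ∀ x, HasGradientAt f (g x) x)
    (β : ℝ) (hsmooth : ∀ x y, ‖g x - g y‖ ≤ β * ‖x - y‖) (a b : E) :
    f b ≤ f a + ⟪g a, b - a⟫ + β / 2 * ‖b - a‖ ^ 2 := by
  set u := b - a with hu
  set h : ℝ → ℝ := fun t => f a + t * ⟪g a, u⟫ + β / 2 * t ^ 2 * ‖u‖ ^ 2 - f (a + t • u) with hh
  have hd : ∀ t : ℝ, HasDerivAt h (⟪g a, u⟫ + β / 2 * (2 * t) * ‖u‖ ^ 2 - ⟪g (a + t • u), u⟫) t := by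
    intro t
    have h3 := (((hasDerivAt_pow 2 t).const_mul (β / 2)).mul_const (‖u‖ ^ 2))
    have h2 := ((hasDerivAt_id t).mul_const ⟪g a, u⟫).const_add (f a)
    have h1 : HasDerivAt (fun s : ℝ => f a + s * ⟪g a, u⟫ + β / 2 * s ^ 2 * ‖u‖ ^ 2)
        (⟪g a, u⟫ + β / 2 * (2 * t) * ‖u‖ ^ 2) t := by
      simpa [pow_one, mul_comm, mul_assoc, mul_left_comm, Pi.add_def] using h2.add h3
    exact h1.sub (fw_path_deriv f g hgrad a u t)
  have hderiv_nonneg : ∀ t ∈ Set.Ioo (0:ℝ) 1, 0 ≤ deriv h t := by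
    intro t ht
    rw [(hd t).deriv]
    have hip : ⟪g (a + t • u) - g a, u⟫ ≤ β * t * ‖u‖ ^ 2 := by
      calc ⟪g (a + t • u) - g a, u⟫ ≤ ‖g (a + t • u) - g a‖ * ‖u‖ := real_inner_le_norm _ _
        _ ≤ β * ‖(a + t • u) - a‖ * ‖u‖ := by
            have := hsmooth (a + t • u) a
            nlinarith [norm_nonneg u]
        _ = β * t * ‖u‖ ^ 2 := by
            rw [add_sub_cancel_left, norm_smul]
            simp [abs_of_nonneg ht.1.le]
            ring
    rw [inner_sub_left] at hip
    nlinarith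
  have hmono : MonotoneOn h (Set.Icc (0:ℝ) 1) := by
    apply monotoneOn_of_deriv_nonneg (convex_Icc 0 1)
    · have : Differentiable ℝ h := fun t => (hd t).differentiableAt
      exact this.continuous.continuousOn
    · intro t _
      exact ((hd t).differentiableAt).differentiableWithinAt
    · intro t ht
      rw [interior_Icc] at ht
      exact hderiv_nonneg t ht
  have h01 : h 0 ≤ h 1 := hmono (by norm_num) (by norm_num) zero_le_one
  have h0 : h 0 = 0 := by simp [hh]
  have h1v : h 1 = f a + ⟪g a, u⟫ + β / 2 * ‖u‖ ^ 2 - f b := by simp [hh, hu]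
  rw [h0, h1v] at h01
  linarith

lemma fw_grad_convex (f : E → ℝ) (g : E → E) (hfconv : ConvexOn ℝ Set.univ f)
    (hgrad : ∀ x, HasGradientAt f (g x) x) (a b : E) :
    ⟪g a, b - a⟫ ≤ f b - f a := by
  set u := b - a with hu
  have hder : HasDerivAt (fun s : ℝ => f (a + s • u)) ⟪g a, u⟫ 0 := by
    have := fw_path_deriv f g hgrad a u 0
    simpa using this
  have htend := hasDerivAt_iff_tendsto_slope.1 hder
  have htend' : Filter.Tendsto (slope (fun s : ℝ => f (a + s • u)) 0) (nhdsWithin 0 (Set.Ioi 0))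
      (nhds ⟪g a, u⟫) :=
    htend.mono_left (nhdsWithin_mono 0 (fun x hx => (ne_of_gt hx : x ≠ 0)))
  refine le_of_tendsto htend' ?_
  filter_upwards [Ioc_mem_nhdsGT_of_mem (Set.mem_Ico.2 ⟨le_rfl, zero_lt_one⟩)] with t ht
  have ht0 : (0:ℝ) < t := ht.1
  have hconv := hfconv.2 (Set.mem_univ a) (Set.mem_univ b) (by linarith [ht.2] : (0:ℝ) ≤ 1 - t)
      ht0.le (by ring : (1 - t) + t = 1)
  have hpt : a + t • u = (1 - t) • a + t • b := by rw [hu]; module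
  rw [slope_def_field]
  simp only [sub_zero]
  rw [div_le_iff₀ ht0]
  have hb : f (a + t • u) ≤ (1 - t) * f a + t * f b := by rw [hpt]; simpa using hconv
  simp only [zero_smul, add_zero] at hb ⊢
  nlinarith

lemma fw_key_ineq (S R A D t : ℝ) (hS0 : 0 ≤ S) (hSR : S ≤ R) (hR1 : R ≤ 1)
    (hA : 0 ≤ A) (hD : 0 ≤ D) (ht : 0 ≤ t) :
    S*R*((A+D)^2 - t^2) + ((1-S)*A + S*D + S*t)^2/2 ≤ 2*A^2 + 4*R^2*D^2 := by
  have hR0 : (0:ℝ) ≤ R := le_trans hS0 hSR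
  have hmain : S*R*(A+D)^2 + ((1-S)*A + S*D)^2 ≤ 2*A^2 + 4*R^2*D^2 := by
    nlinarith [sq_nonneg (A - R*D),
      mul_nonneg (mul_nonneg (by linarith : (0:ℝ) ≤ R - S) (by linarith : (0:ℝ) ≤ 1 - S)) (mul_nonneg hA hD),
      mul_nonneg (mul_nonneg hS0 (by linarith : (0:ℝ) ≤ 2 - R - S)) (sq_nonneg A),
      mul_nonneg (mul_nonneg (by linarith : (0:ℝ) ≤ R - S) (by linarith : (0:ℝ) ≤ 2*R + S)) (sq_nonneg D)]
  rcases eq_or_lt_of_le hR0 with h0 | hRpos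
  · have hS : S = 0 := le_antisymm (h0 ▸ hSR) hS0
    subst hS
    rw [← h0]
    nlinarith [sq_nonneg A, sq_nonneg D]
  · have h2RSpos : (0:ℝ) < 2*R - S := by linarith
    have hq : 0 ≤ ((1-S)*A + S*D)^2/2 + S*R*t^2 - S*t*((1-S)*A + S*D) - S^2*t^2/2 := by
      have h1 : ((1-S)*A + S*D)^2/2 + S*R*t^2 - S*t*((1-S)*A + S*D) - S^2*t^2/2
          = (S*((2*R-S)*t - ((1-S)*A + S*D))^2 + 2*(R-S)*((1-S)*A + S*D)^2) / (2*(2*R-S)) := by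
        field_simp
        ring
      rw [h1]
      apply div_nonneg _ (by linarith)
      nlinarith [mul_nonneg hS0 (sq_nonneg ((2*R-S)*t - ((1-S)*A + S*D))),
        sq_nonneg ((1-S)*A + S*D), (by linarith : (0:ℝ) ≤ R - S)]
    nlinarith [hmain, hq]

end helpers


/-- one-step error reduction for the linearly convergent NEP
oracle-based Frank-Wolfe variant for polytopes (Lemma 2 of the paper). -/
theorem fw_nep_polytope_one_step_improvement {d : ℕ}
    (V : Set (EuclideanSpace ℝ (Fin d))) (hVfin : V.Finite)
    (K : Set (EuclideanSpace ℝ (Fin d))) (hK : K = convexHull ℝ V)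
    (hVext : V = K.extremePoints ℝ)
    (f : EuclideanSpace ℝ (Fin d) → ℝ)
    (g : EuclideanSpace ℝ (Fin d) → EuclideanSpace ℝ (Fin d))
    (hfconv : ConvexOn ℝ Set.univ f)
    (hgrad : ∀ x, HasGradientAt f (g x) x)
    (β : ℝ) (hβ : 0 < β)
    (hsmooth : ∀ x y, ‖g x - g y‖ ≤ β * ‖x - y‖)
    (fstar : ℝ) (hfstar : ∀ x ∈ K, fstar ≤ f x)
    -- the set F* : a convex subset of K containing all optimal solutions,
    -- each of whose points lies in the convex hull of the vertices inside it
    (Fstar : Set (EuclideanSpace ℝ (Fin d)))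
    (hFK : Fstar ⊆ K) (hFconv : Convex ℝ Fstar)
    (hXF : ∀ y ∈ K, f y = fstar → y ∈ Fstar)
    (hFvert : ∀ y ∈ Fstar, y ∈ convexHull ℝ (V ∩ Fstar))
    (DF : ℝ) (hDF : ∀ u ∈ Fstar, ∀ w ∈ Fstar, ‖u - w‖ ≤ DF)
    -- the current iterate and its convex decomposition into vertices
    (k : ℕ) (vv : Fin k → EuclideanSpace ℝ (Fin d)) (lam : Fin k → ℝ)
    (hvvV : ∀ i, vv i ∈ V) (hlam0 : ∀ i, 0 ≤ lam i) (hlam1 : ∑ i, lam i = 1)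
    (xt : EuclideanSpace ℝ (Fin d)) (hxt : xt = ∑ i, lam i • vv i)
    (η : ℝ) (hη : η ∈ Set.Icc (0:ℝ) 1)
    (R : ℝ) (hR : R ≤ 1)
    -- an optimal solution reachable by moving weight at most R onto F*
    (xstar : EuclideanSpace ℝ (Fin d)) (hxstarK : xstar ∈ K)
    (hxstaropt : f xstar = fstar)
    (Δ : Fin k → ℝ) (hΔ : ∀ i, Δ i ∈ Set.Icc 0 (lam i)) (hΔsum : ∑ i, Δ i ≤ R)
    (z : EuclideanSpace ℝ (Fin d)) (hz : z ∈ Fstar)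
    (hdecomp : xstar = ∑ i, (lam i - Δ i) • vv i + (∑ i, Δ i) • z)
    -- the new vertex returned by the NEP oracle with parameter ρ = ηR
    (w : EuclideanSpace ℝ (Fin d)) (hwV : w ∈ V)
    (hw : ∀ u ∈ V, ⟪g xt, w⟫ + β * η * R * ‖w - xt‖ ^ 2
        ≤ ⟪g xt, u⟫ + β * η * R * ‖u - xt‖ ^ 2)
    -- the next iterate (Option 1 or Option 2)
    (xnext : EuclideanSpace ℝ (Fin d))
    (hxnext :
      (xnext ∈ convexHull ℝ (insert w (Set.range vv)) ∧
        ∀ y ∈ convexHull ℝ (insert w (Set.range vv)),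
          ⟪g xt, xnext⟫ + β / 2 * ‖xnext - xt‖ ^ 2
            ≤ ⟪g xt, y⟫ + β / 2 * ‖y - xt‖ ^ 2) ∨
      (xnext ∈ convexHull ℝ (insert w (Set.range vv)) ∧
        ∀ y ∈ convexHull ℝ (insert w (Set.range vv)), f xnext ≤ f y)) :
    f xnext - fstar ≤ (1 - η) * (f xt - fstar)
      + η ^ 2 * β * (2 * ‖xt - xstar‖ ^ 2 + 4 * R ^ 2 * DF ^ 2) := by
  obtain ⟨hη0, hη1⟩ := hη
  set S : ℝ := ∑ i, Δ i with hSdef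
  have hΔ0 : ∀ i, 0 ≤ Δ i := fun i => (hΔ i).1
  have hS0 : 0 ≤ S := Finset.sum_nonneg fun i _ => hΔ0 i
  have hSR : S ≤ R := hΔsum
  have hR0 : 0 ≤ R := le_trans hS0 hSR
  have hxstarF : xstar ∈ Fstar := hXF xstar hxstarK hxstaropt
  have hD0 : 0 ≤ DF := le_trans (norm_nonneg _) (hDF z hz z hz)
  set A : ℝ := ‖xstar - xt‖ with hAdef
  set tt : ℝ := ‖w - xt‖ with httdef
  set G : EuclideanSpace ℝ (Fin d) := g xt with hGdef
  set dvec : EuclideanSpace ℝ (Fin d) := xstar - xt + S • (w - z) with hdvecdef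
  -- identity: dvec = S • w - ∑ Δ i • vv i
  have hsplit : ∑ i, (lam i - Δ i) • vv i = (∑ i, lam i • vv i) - ∑ i, Δ i • vv i := by
    rw [← Finset.sum_sub_distrib]
    exact Finset.sum_congr rfl fun i _ => sub_smul _ _ _
  have hdvec : dvec = S • w - ∑ i, Δ i • vv i := by
    have h1 : xstar = xt - (∑ i, Δ i • vv i) + S • z := by
      rw [hdecomp, hsplit, ← hxt]
    rw [hdvecdef, h1]
    module
  -- the candidate point y
  set y : EuclideanSpace ℝ (Fin d) := xt + η • dvec with hydef
  have hyeq : y = (∑ i, (lam i - η * Δ i) • vv i) + (η * S) • w := by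
    have e1 : ∑ i, (lam i - η * Δ i) • vv i
        = (∑ i, lam i • vv i) - η • ∑ i, Δ i • vv i := by
      rw [Finset.smul_sum, ← Finset.sum_sub_distrib]
      refine Finset.sum_congr rfl fun i _ => ?_
      rw [sub_smul, smul_smul]
    rw [hydef, hdvec, e1, ← hxt]
    module
  -- y is in the convex hull
  have hymem : y ∈ convexHull ℝ (insert w (Set.range vv)) := by
    rw [hyeq]
    set W : Fin (k+1) → ℝ := Fin.snoc (fun i => lam i - η * Δ i) (η * S) with hWdef
    set P : Fin (k+1) → EuclideanSpace ℝ (Fin d) := Fin.snoc vv w with hPdef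
    have hW0 : ∀ i, 0 ≤ W i := by
      refine Fin.lastCases ?_ (fun i => ?_)
      · simp only [hWdef, Fin.snoc_last]
        exact mul_nonneg hη0 hS0
      · simp only [hWdef, Fin.snoc_castSucc]
        have h1 : η * Δ i ≤ Δ i := by nlinarith [hΔ0 i]
        have := (hΔ i).2
        linarith
    have hWsum : ∑ i, W i = 1 := by
      rw [Fin.sum_univ_castSucc]
      simp only [hWdef, Fin.snoc_castSucc, Fin.snoc_last]
      rw [Finset.sum_sub_distrib, ← Finset.mul_sum, hlam1, ← hSdef]
      ring
    have hP : ∀ i, P i ∈ insert w (Set.range vv) := by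
      refine Fin.lastCases ?_ (fun i => ?_)
      · simp [hPdef]
      · simp only [hPdef, Fin.snoc_castSucc]
        exact Set.mem_insert_iff.2 (Or.inr ⟨i, rfl⟩)
    have hsum_mem := (convex_convexHull ℝ (insert w (Set.range vv))).sum_mem
      (t := Finset.univ) (fun i _ => hW0 i) hWsum
      (fun i _ => subset_convexHull ℝ _ (hP i))
    have heq : ∑ i, W i • P i = (∑ i, (lam i - η * Δ i) • vv i) + (η * S) • w := by
      rw [Fin.sum_univ_castSucc]
      simp only [hWdef, hPdef, Fin.snoc_castSucc, Fin.snoc_last]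
    rw [← heq]
    exact hsum_mem
  -- model decrease: f xnext ≤ f xt + ⟪G, y - xt⟫ + β/2 ‖y - xt‖²
  have hmodel : f xnext ≤ f xt + ⟪G, y - xt⟫ + β / 2 * ‖y - xt‖ ^ 2 := by
    rcases hxnext with ⟨hmem, hmin⟩ | ⟨hmem, hmin⟩
    · have hd1 := fw_descent f g hgrad β hsmooth xt xnext
      have hd2 := hmin y hymem
      rw [inner_sub_right] at hd1 ⊢
      linarith
    · have hd1 := fw_descent f g hgrad β hsmooth xt y
      exact le_trans (hmin y hymem) hd1
  have hyxt : y - xt = η • dvec := by rw [hydef]; abel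
  have hinner_y : ⟪G, y - xt⟫ = η * ⟪G, dvec⟫ := by
    rw [hyxt, real_inner_smul_right]
  have hnorm_y : ‖y - xt‖ ^ 2 = η ^ 2 * ‖dvec‖ ^ 2 := by
    rw [hyxt, norm_smul, Real.norm_eq_abs, abs_of_nonneg hη0, mul_pow]
  -- gradient convexity inequality
  have hgradineq : ⟪G, xstar - xt⟫ ≤ fstar - f xt := by
    have := fw_grad_convex f g hfconv hgrad xt xstar
    rw [hxstaropt] at this
    exact this
  -- the oracle inequality transferred to z
  have horacle : ⟪G, w⟫ + β * η * R * tt ^ 2 ≤ ⟪G, z⟫ + β * η * R * (A + DF) ^ 2 := by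
    have hc0 : 0 ≤ β * η * R := by positivity
    have hlin : IsLinearMap ℝ (fun x : EuclideanSpace ℝ (Fin d) => ⟪G, x⟫) :=
      ⟨fun x y' => inner_add_right G x y', fun c x => real_inner_smul_right G x c⟩
    have hsub : V ∩ Fstar ⊆
        {x | ⟪G, w⟫ + β * η * R * tt ^ 2 - β * η * R * (A + DF) ^ 2 ≤ ⟪G, x⟫} := by
      rintro u ⟨huV, huF⟩
      have h1 := hw u huV
      have h2 : ‖u - xt‖ ≤ A + DF := by
        calc ‖u - xt‖ ≤ ‖u - xstar‖ + ‖xstar - xt‖ := by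
              have := norm_sub_le_norm_sub_add_norm_sub u xstar xt
              simpa using this
          _ ≤ DF + A := add_le_add (hDF u huF xstar hxstarF) le_rfl
          _ = A + DF := by ring
      have h3 : ‖u - xt‖ ^ 2 ≤ (A + DF) ^ 2 := by
        have := pow_le_pow_left₀ (norm_nonneg (u - xt)) h2 2
        exact this
      have h4 : β * η * R * ‖u - xt‖ ^ 2 ≤ β * η * R * (A + DF) ^ 2 :=
        mul_le_mul_of_nonneg_left h3 hc0
      simp only [Set.mem_setOf_eq]
      linarith
    have hzmem := convexHull_min hsub (convex_halfSpace_ge hlin _) (hFvert z hz)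
    have hzmem' : ⟪G, w⟫ + β * η * R * tt ^ 2 - β * η * R * (A + DF) ^ 2 ≤ ⟪G, z⟫ := hzmem
    linarith
  -- inner product expansion of dvec
  have hGdvec : ⟪G, dvec⟫ = ⟪G, xstar - xt⟫ + S * (⟪G, w⟫ - ⟪G, z⟫) := by
    rw [hdvecdef]
    simp only [inner_add_right, inner_sub_right, real_inner_smul_right]
  -- norm bound on dvec
  have hnormdvec : ‖dvec‖ ≤ ((1 - S) * A + S * DF) + S * tt := by
    have hdvec2 : dvec = ((1 - S) • (xstar - xt) + S • (xstar - z)) + S • (w - xt) := by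
      rw [hdvecdef]; module
    calc ‖dvec‖ ≤ ‖(1 - S) • (xstar - xt) + S • (xstar - z)‖ + ‖S • (w - xt)‖ := by
          rw [hdvec2]; exact norm_add_le _ _
      _ ≤ (‖(1 - S) • (xstar - xt)‖ + ‖S • (xstar - z)‖) + ‖S • (w - xt)‖ :=
          add_le_add (norm_add_le _ _) le_rfl
      _ ≤ ((1 - S) * A + S * DF) + S * tt := by
          have h1S : (0:ℝ) ≤ 1 - S := by linarith
          rw [norm_smul, norm_smul, norm_smul, Real.norm_of_nonneg h1S, Real.norm_of_nonneg hS0]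
          have := hDF xstar hxstarF z hz
          have h5 : S * ‖xstar - z‖ ≤ S * DF := mul_le_mul_of_nonneg_left this hS0
          rw [← hAdef, ← httdef]
          linarith
  have hnormdvec2 : ‖dvec‖ ^ 2 ≤ (((1 - S) * A + S * DF) + S * tt) ^ 2 :=
    pow_le_pow_left₀ (norm_nonneg _) hnormdvec 2
  -- key real inequality
  have hkey := fw_key_ineq S R A DF tt hS0 hSR hR (norm_nonneg _) hD0 (norm_nonneg _)
  -- assemble
  have hA1 : ⟪G, dvec⟫ ≤ (fstar - f xt) + S * (β * η * R * ((A + DF) ^ 2 - tt ^ 2)) := by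
    have h1 : ⟪G, w⟫ - ⟪G, z⟫ ≤ β * η * R * ((A + DF) ^ 2 - tt ^ 2) := by linarith
    have h2 : S * (⟪G, w⟫ - ⟪G, z⟫) ≤ S * (β * η * R * ((A + DF) ^ 2 - tt ^ 2)) :=
      mul_le_mul_of_nonneg_left h1 hS0
    rw [hGdvec]
    linarith
  have hA2 : η * ⟪G, dvec⟫ ≤ η * ((fstar - f xt) + S * (β * η * R * ((A + DF) ^ 2 - tt ^ 2))) :=
    mul_le_mul_of_nonneg_left hA1 hη0
  have hA3 : β / 2 * (η ^ 2 * ‖dvec‖ ^ 2)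
      ≤ β / 2 * (η ^ 2 * (((1 - S) * A + S * DF) + S * tt) ^ 2) := by
    have := mul_le_mul_of_nonneg_left hnormdvec2 (sq_nonneg η)
    exact mul_le_mul_of_nonneg_left this (by positivity)
  have hkey2 : β * η ^ 2 * (S*R*((A+DF)^2 - tt^2) + ((1-S)*A + S*DF + S*tt)^2/2)
      ≤ β * η ^ 2 * (2*A^2 + 4*R^2*DF^2) :=
    mul_le_mul_of_nonneg_left hkey (by positivity)
  have hAnorm : ‖xt - xstar‖ = A := by rw [hAdef, norm_sub_rev]
  rw [hAnorm]
  rw [hinner_y, hnorm_y] at hmodel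
  linarith [hmodel, hA2, hA3, hkey2]
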